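/- arXiv:1701.00521 — 4 statements merged into one kernel-verified Lean document; each statement's English description precedes it below -/
import Mathlib

section
/- For any three smooth vector fields u, b, Γ̃ on ℝ³ with ∇·Γ̃ = 0, the identity b×[∇×(u×Γ̃)] + u×[∇×(Γ̃×b)] + Γ̃×[u,b] + ∇(u·(b×Γ̃)) = 0 holds, where [u,b] = u·∇b − b·∇u is the Lie bracket. -/
open scoped BigOperators
open MeasureTheory

noncomputable section

abbrev V3 : Type := Fin 3 → ℝ

/-- Partial derivative of a scalar field in coordinate direction `i`. -/
noncomputable def pd (f : V3 → ℝ) (i : Fin 3) (x : V3) : ℝ :=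
  fderiv ℝ f x (Pi.single i 1)

/-- Gradient of a scalar field on ℝ³. -/
noncomputable def grad3 (f : V3 → ℝ) (x : V3) : V3 := fun i => pd f i x

/-- Divergence of a vector field on ℝ³. -/
noncomputable def div3 (F : V3 → V3) (x : V3) : ℝ := ∑ i, pd (fun y => F y i) i x

/-- Curl of a vector field on ℝ³. -/
noncomputable def curl3 (F : V3 → V3) (x : V3) : V3 :=
  ![pd (fun y => F y 2) 1 x - pd (fun y => F y 1) 2 x,
    pd (fun y => F y 0) 2 x - pd (fun y => F y 2) 0 x,
    pd (fun y => F y 1) 0 x - pd (fun y => F y 0) 1 x]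

/-- Cross product in ℝ³. -/
def cross3 (a b : V3) : V3 :=
  ![a 1 * b 2 - a 2 * b 1, a 2 * b 0 - a 0 * b 2, a 0 * b 1 - a 1 * b 0]

/-- Dot product in ℝ³. -/
def dot3 (a b : V3) : ℝ := ∑ i, a i * b i

/-- Advective derivative (F·∇)G of a vector field G along F. -/
noncomputable def advD (F G : V3 → V3) (x : V3) : V3 :=
  fun j => ∑ i, F x i * pd (fun y => G y j) i x

/-- Time partial derivative of a time-dependent vector field. -/
noncomputable def dtV (F : ℝ → V3 → V3) (t : ℝ) (x : V3) : V3 :=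
  fun i => deriv (fun s => F s x i) t

/-- Time partial derivative of a time-dependent scalar field. -/
noncomputable def dtS (f : ℝ → V3 → ℝ) (t : ℝ) (x : V3) : ℝ :=
  deriv (fun s => f s x) t

/-- Smooth time-dependent vector field. -/
def SmoothTV (F : ℝ → V3 → V3) : Prop := ContDiff ℝ (⊤ : ℕ∞) (Function.uncurry F)

/-- Smooth time-dependent scalar field. -/
def SmoothTS (f : ℝ → V3 → ℝ) : Prop := ContDiff ℝ (⊤ : ℕ∞) (Function.uncurry f)

/-- Smooth (static) vector field. -/
def SmoothV (F : V3 → V3) : Prop := ContDiff ℝ (⊤ : ℕ∞) F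

/-- Smooth (static) scalar field. -/
def SmoothS (f : V3 → ℝ) : Prop := ContDiff ℝ (⊤ : ℕ∞) f


lemma pd_mul (f g : V3 → ℝ) (hf : Differentiable ℝ f) (hg : Differentiable ℝ g) (i : Fin 3) (x : V3) :
    pd (fun y => f y * g y) i x = pd f i x * g x + f x * pd g i x := by
  unfold pd
  rw [fderiv_fun_mul (hf x) (hg x)]
  simp [mul_comm]
  ring

lemma pd_sub (f g : V3 → ℝ) (hf : Differentiable ℝ f) (hg : Differentiable ℝ g) (i : Fin 3) (x : V3) :
    pd (fun y => f y - g y) i x = pd f i x - pd g i x := by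
  unfold pd
  rw [fderiv_fun_sub (hf x) (hg x)]; rfl

lemma pd_add (f g : V3 → ℝ) (hf : Differentiable ℝ f) (hg : Differentiable ℝ g) (i : Fin 3) (x : V3) :
    pd (fun y => f y + g y) i x = pd f i x + pd g i x := by
  unfold pd
  rw [fderiv_fun_add (hf x) (hg x)]; rfl

theorem vector_identity_divergence_free
    (u b G : V3 → V3) (hu : SmoothV u) (hb : SmoothV b) (hG : SmoothV G)
    (hdivG : ∀ x, div3 G x = 0) :
    ∀ x, cross3 (b x) (curl3 (fun y => cross3 (u y) (G y)) x)
      + cross3 (u x) (curl3 (fun y => cross3 (G y) (b y)) x)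
      + cross3 (G x) (advD u b x - advD b u x)
      + grad3 (fun y => dot3 (u y) (cross3 (b y) (G y))) x = 0 := by
  intro x
  have hu' : Differentiable ℝ u := hu.differentiable (by simp)
  have hb' : Differentiable ℝ b := hb.differentiable (by simp)
  have hG' : Differentiable ℝ G := hG.differentiable (by simp)
  have du : ∀ i, Differentiable ℝ fun y => u y i := fun i => differentiable_pi.mp hu' i
  have db : ∀ i, Differentiable ℝ fun y => b y i := fun i => differentiable_pi.mp hb' i
  have dG : ∀ i, Differentiable ℝ fun y => G y i := fun i => differentiable_pi.mp hG' i
  have hdiv := hdivG x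
  simp only [div3, Fin.sum_univ_three] at hdiv
  funext j
  fin_cases j
  · simp only [Fin.zero_eta, Fin.mk_one, Fin.reduceFinMk, cross3, curl3, grad3, dot3, advD, Fin.sum_univ_three, Pi.add_apply,
      Pi.sub_apply, Pi.zero_apply, Matrix.cons_val_zero, Matrix.cons_val_one,
      Matrix.head_cons, Matrix.cons_val_two, Matrix.tail_cons, Fin.isValue]
    simp (disch := fun_prop) only [pd_sub, pd_mul, pd_add]
    linear_combination (b x 1 * u x 2 - b x 2 * u x 1) * hdiv
  · simp only [Fin.zero_eta, Fin.mk_one, Fin.reduceFinMk, cross3, curl3, grad3, dot3, advD, Fin.sum_univ_three, Pi.add_apply,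
      Pi.sub_apply, Pi.zero_apply, Matrix.cons_val_zero, Matrix.cons_val_one,
      Matrix.head_cons, Matrix.cons_val_two, Matrix.tail_cons, Fin.isValue]
    simp (disch := fun_prop) only [pd_sub, pd_mul, pd_add]
    linear_combination (b x 2 * u x 0 - b x 0 * u x 2) * hdiv
  · simp only [Fin.zero_eta, Fin.mk_one, Fin.reduceFinMk, cross3, curl3, grad3, dot3, advD, Fin.sum_univ_three, Pi.add_apply,
      Pi.sub_apply, Pi.zero_apply, Matrix.cons_val_zero, Matrix.cons_val_one,
      Matrix.head_cons, Matrix.cons_val_two, Matrix.tail_cons, Fin.isValue]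
    simp (disch := fun_prop) only [pd_sub, pd_mul, pd_add]
    linear_combination (b x 0 * u x 1 - b x 1 * u x 0) * hdiv


end
end

section
/- Suppose ρ, Λ are smooth scalar fields and u, B smooth vector fields on ℝ³ × ℝ such that ∂ρ/∂t + ∇·(ρu) = 0, ∂B/∂t − ∇×(u×B) = 0, ∇·B = 0, and dΛ/dt := ∂Λ/∂t + u·∇Λ = 0. Then ∂(B·∇Λ)/∂t + ∇·[(B·∇Λ)u] = 0. -/
open scoped BigOperators
open MeasureTheory

noncomputable section

/-! ### Auxiliary machinery -/

noncomputable def ee (i : Fin 3) : ℝ × V3 := ((0:ℝ), Pi.single i 1)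
noncomputable def et : ℝ × V3 := ((1:ℝ), (0:V3))

noncomputable def cmpF (F : ℝ → V3 → V3) (j : Fin 3) : ℝ × V3 → ℝ := fun q => F q.1 q.2 j

lemma topok : ((⊤:ℕ∞) : WithTop ℕ∞) + 1 ≤ ((⊤:ℕ∞) : WithTop ℕ∞) := by exact_mod_cast le_top
lemma oneok : ((⊤:ℕ∞) : WithTop ℕ∞) ≠ 0 := by simp

lemma pd_eq (G : ℝ × V3 → ℝ) (t : ℝ) (x : V3) (hG : DifferentiableAt ℝ G (t, x)) (i : Fin 3) :
    pd (fun y => G (t, y)) i x = fderiv ℝ G (t, x) (ee i) := by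
  have h := hG.hasFDerivAt.comp x (hasFDerivAt_prodMk_right t x)
  have h2 : fderiv ℝ (fun y => G (t, y)) x
      = (fderiv ℝ G (t, x)).comp (ContinuousLinearMap.inr ℝ ℝ V3) := h.fderiv
  rw [pd, h2]
  rfl

lemma dt_eq (G : ℝ × V3 → ℝ) (t : ℝ) (x : V3) (hG : DifferentiableAt ℝ G (t, x)) :
    deriv (fun s => G (s, x)) t = fderiv ℝ G (t, x) et := by
  have h1 : HasDerivAt (fun s : ℝ => ((s, x) : ℝ × V3)) ((1:ℝ), (0:V3)) t :=
    (hasDerivAt_id t).prodMk (hasDerivAt_const t x)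
  exact (hG.hasFDerivAt.comp_hasDerivAt t h1).deriv

lemma smooth_dL {L : ℝ × V3 → ℝ} (hL : ContDiff ℝ (⊤:ℕ∞) L) (w : ℝ × V3) :
    ContDiff ℝ (⊤:ℕ∞) (fun q => fderiv ℝ L q w) :=
  (hL.fderiv_right topok).clm_apply contDiff_const

lemma cross_deriv {L : ℝ × V3 → ℝ} (hL : ContDiff ℝ (⊤:ℕ∞) L) (p v w : ℝ × V3) :
    fderiv ℝ (fun q => fderiv ℝ L q w) p v = fderiv ℝ (fderiv ℝ L) p v w := by
  rw [fderiv_clm_apply (((hL.fderiv_right topok).differentiable oneok) p)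
    (differentiableAt_const w)]
  simp

lemma d2_symm {L : ℝ × V3 → ℝ} (hL : ContDiff ℝ (⊤:ℕ∞) L) (p v w : ℝ × V3) :
    fderiv ℝ (fderiv ℝ L) p v w = fderiv ℝ (fderiv ℝ L) p w v :=
  second_derivative_symmetric
    (fun y => ((hL.differentiable oneok) y).hasFDerivAt)
    (((hL.fderiv_right topok).differentiable oneok p).hasFDerivAt) v w

lemma fderiv_mul_apply' {c d : ℝ × V3 → ℝ} {p : ℝ × V3}
    (hc : DifferentiableAt ℝ c p) (hd : DifferentiableAt ℝ d p) (v : ℝ × V3) :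
    fderiv ℝ (fun q => c q * d q) p v = c p * fderiv ℝ d p v + d p * fderiv ℝ c p v := by
  rw [fderiv_fun_mul hc hd]
  simp

lemma dPhi (L : ℝ × V3 → ℝ) (Bc : Fin 3 → ℝ × V3 → ℝ)
    (hL : ContDiff ℝ (⊤:ℕ∞) L) (hBc : ∀ j, ContDiff ℝ (⊤:ℕ∞) (Bc j)) (p v : ℝ × V3) :
    fderiv ℝ (fun q => ∑ j : Fin 3, Bc j q * fderiv ℝ L q (ee j)) p v
      = ∑ j : Fin 3, (fderiv ℝ (Bc j) p v * fderiv ℝ L p (ee j)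
          + Bc j p * fderiv ℝ (fderiv ℝ L) p v (ee j)) := by
  rw [fderiv_fun_sum (fun j _ =>
    (((hBc j).mul (smooth_dL hL (ee j))).differentiable oneok p))]
  rw [ContinuousLinearMap.sum_apply]
  refine Finset.sum_congr rfl fun j _ => ?_
  rw [fderiv_mul_apply' (((hBc j).differentiable oneok) p)
    (((smooth_dL hL (ee j)).differentiable oneok) p), cross_deriv hL p v (ee j)]
  ring

lemma dPsi (L : ℝ × V3 → ℝ) (Uc : Fin 3 → ℝ × V3 → ℝ)
    (hL : ContDiff ℝ (⊤:ℕ∞) L) (hUc : ∀ j, ContDiff ℝ (⊤:ℕ∞) (Uc j)) (p v : ℝ × V3) :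
    fderiv ℝ (fun q => fderiv ℝ L q et + ∑ i : Fin 3, Uc i q * fderiv ℝ L q (ee i)) p v
      = fderiv ℝ (fderiv ℝ L) p v et + ∑ i : Fin 3, (fderiv ℝ (Uc i) p v * fderiv ℝ L p (ee i)
          + Uc i p * fderiv ℝ (fderiv ℝ L) p v (ee i)) := by
  rw [fderiv_fun_add ((smooth_dL hL et).differentiable oneok p)
    ((ContDiff.sum (fun i _ => (hUc i).mul (smooth_dL hL (ee i)))).differentiable oneok p)]
  rw [ContinuousLinearMap.add_apply, cross_deriv hL p v et]
  congr 1
  exact dPhi L Uc hL hUc p v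

lemma pd_mulsub (a b c d : ℝ × V3 → ℝ)
    (ha : ContDiff ℝ (⊤:ℕ∞) a) (hb : ContDiff ℝ (⊤:ℕ∞) b)
    (hc : ContDiff ℝ (⊤:ℕ∞) c) (hd : ContDiff ℝ (⊤:ℕ∞) d) (t : ℝ) (x : V3) (k : Fin 3) :
    pd (fun y => a (t, y) * b (t, y) - c (t, y) * d (t, y)) k x
      = a (t, x) * fderiv ℝ b (t, x) (ee k) + b (t, x) * fderiv ℝ a (t, x) (ee k)
        - (c (t, x) * fderiv ℝ d (t, x) (ee k) + d (t, x) * fderiv ℝ c (t, x) (ee k)) := by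
  have h := pd_eq (fun q => a q * b q - c q * d q) t x
    (((ha.mul hb).sub (hc.mul hd)).differentiable oneok (t, x)) k
  rw [h, fderiv_fun_sub ((ha.differentiable oneok _).fun_mul (hb.differentiable oneok _))
      ((hc.differentiable oneok _).fun_mul (hd.differentiable oneok _)),
    ContinuousLinearMap.sub_apply,
    fderiv_mul_apply' (ha.differentiable oneok _) (hb.differentiable oneok _),
    fderiv_mul_apply' (hc.differentiable oneok _) (hd.differentiable oneok _)]

theorem advected_scalar_conservation
    (ρ Λ : ℝ → V3 → ℝ) (u B : ℝ → V3 → V3)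
    (hρ : SmoothTS ρ) (hΛ : SmoothTS Λ) (hu : SmoothTV u) (hB : SmoothTV B)
    (hcont : ∀ t x, dtS ρ t x + div3 (fun y => ρ t y • u t y) x = 0)
    (hFar : ∀ t x, dtV B t x - curl3 (fun y => cross3 (u t y) (B t y)) x = 0)
    (hdivB : ∀ t x, div3 (B t) x = 0)
    (hadv : ∀ t x, dtS Λ t x + dot3 (u t x) (grad3 (Λ t) x) = 0) :
    ∀ t x, dtS (fun s y => dot3 (B s y) (grad3 (Λ s) y)) t x
      + div3 (fun y => dot3 (B t y) (grad3 (Λ t) y) • u t y) x = 0 := by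
  intro t x
  have hL : ContDiff ℝ (⊤:ℕ∞) (Function.uncurry Λ) := hΛ
  have hLp : ∀ q : ℝ × V3, DifferentiableAt ℝ (Function.uncurry Λ) q :=
    fun q => (hL.differentiable oneok) q
  have hBj : ∀ j, ContDiff ℝ (⊤:ℕ∞) (cmpF B j) := fun j => contDiff_pi.mp hB j
  have hUj : ∀ j, ContDiff ℝ (⊤:ℕ∞) (cmpF u j) := fun j => contDiff_pi.mp hu j
  have hΦs : ContDiff ℝ (⊤:ℕ∞)
      (fun q => ∑ j : Fin 3, cmpF B j q * fderiv ℝ (Function.uncurry Λ) q (ee j)) :=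
    ContDiff.sum fun j _ => (hBj j).mul (smooth_dL hL (ee j))
  -- dot3 in terms of the uncurried data
  have hdot : ∀ s y, dot3 (B s y) (grad3 (Λ s) y)
      = ∑ j : Fin 3, cmpF B j (s, y) * fderiv ℝ (Function.uncurry Λ) (s, y) (ee j) := by
    intro s y
    simp only [dot3, grad3]
    refine Finset.sum_congr rfl fun j _ => ?_
    rw [show pd (Λ s) j y = fderiv ℝ (Function.uncurry Λ) (s, y) (ee j) from
      pd_eq _ s y (hLp _) j]
    rfl
  -- the time-derivative piece
  have h1 : dtS (fun s y => dot3 (B s y) (grad3 (Λ s) y)) t x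
      = fderiv ℝ (fun q => ∑ j : Fin 3, cmpF B j q * fderiv ℝ (Function.uncurry Λ) q (ee j))
          (t, x) et := by
    show deriv (fun s => dot3 (B s x) (grad3 (Λ s) x)) t = _
    rw [show (fun s => dot3 (B s x) (grad3 (Λ s) x))
        = fun s => (fun q => ∑ j : Fin 3, cmpF B j q *
            fderiv ℝ (Function.uncurry Λ) q (ee j)) (s, x) from funext fun s => hdot s x]
    exact dt_eq _ t x (hΦs.differentiable oneok (t, x))
  -- the divergence piece
  have h2 : div3 (fun y => dot3 (B t y) (grad3 (Λ t) y) • u t y) x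
      = ∑ i : Fin 3, fderiv ℝ (fun q =>
          (∑ j : Fin 3, cmpF B j q * fderiv ℝ (Function.uncurry Λ) q (ee j)) * cmpF u i q)
          (t, x) (ee i) := by
    show ∑ i : Fin 3, pd (fun y => (dot3 (B t y) (grad3 (Λ t) y) • u t y) i) i x = _
    refine Finset.sum_congr rfl fun i _ => ?_
    rw [show (fun y => (dot3 (B t y) (grad3 (Λ t) y) • u t y) i)
        = fun y => (fun q => (∑ j : Fin 3, cmpF B j q *
            fderiv ℝ (Function.uncurry Λ) q (ee j)) * cmpF u i q) (t, y) from by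
      funext y
      show dot3 (B t y) (grad3 (Λ t) y) * u t y i = _
      rw [hdot t y]
      rfl]
    exact pd_eq _ t x ((hΦs.mul (hUj i)).differentiable oneok (t, x)) i
  -- the advection equation in uncurried form
  have hΨ0 : ∀ q : ℝ × V3, fderiv ℝ (Function.uncurry Λ) q et
      + ∑ i : Fin 3, cmpF u i q * fderiv ℝ (Function.uncurry Λ) q (ee i) = 0 := by
    rintro ⟨s, y⟩
    have h := hadv s y
    have e3 : dtS Λ s y = fderiv ℝ (Function.uncurry Λ) (s, y) et := dt_eq _ s y (hLp _)
    have e4 : dot3 (u s y) (grad3 (Λ s) y)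
        = ∑ i : Fin 3, cmpF u i (s, y) * fderiv ℝ (Function.uncurry Λ) (s, y) (ee i) := by
      simp only [dot3, grad3]
      refine Finset.sum_congr rfl fun i _ => ?_
      rw [show pd (Λ s) i y = fderiv ℝ (Function.uncurry Λ) (s, y) (ee i) from
        pd_eq _ s y (hLp _) i]
      rfl
    rw [← e3, ← e4]
    exact h
  have hΨd : ∀ k : Fin 3, fderiv ℝ (fun q => fderiv ℝ (Function.uncurry Λ) q et
      + ∑ i : Fin 3, cmpF u i q * fderiv ℝ (Function.uncurry Λ) q (ee i)) (t, x) (ee k) = 0 := by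
    intro k
    rw [show (fun q => fderiv ℝ (Function.uncurry Λ) q et
      + ∑ i : Fin 3, cmpF u i q * fderiv ℝ (Function.uncurry Λ) q (ee i))
        = fun _ => (0:ℝ) from funext hΨ0]
    simp
  have H1 : ∀ k : Fin 3, fderiv ℝ (fderiv ℝ (Function.uncurry Λ)) (t, x) (ee k) et
      + ∑ i : Fin 3, (fderiv ℝ (cmpF u i) (t, x) (ee k) * fderiv ℝ (Function.uncurry Λ) (t, x) (ee i)
        + cmpF u i (t, x) * fderiv ℝ (fderiv ℝ (Function.uncurry Λ)) (t, x) (ee k) (ee i)) = 0 := by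
    intro k
    rw [← dPsi (Function.uncurry Λ) (cmpF u) hL hUj (t, x) (ee k)]
    exact hΨd k
  -- time derivative of B components
  have hdtB : ∀ j : Fin 3, dtV B t x j = fderiv ℝ (cmpF B j) (t, x) et :=
    fun j => dt_eq (cmpF B j) t x ((hBj j).differentiable oneok _)
  have hFar' : ∀ j : Fin 3, dtV B t x j = curl3 (fun y => cross3 (u t y) (B t y)) x j := by
    intro j
    have h := congrFun (hFar t x) j
    simp only [Pi.sub_apply, Pi.zero_apply, sub_eq_zero] at h
    exact h
  -- the three components of the induction equation, fully expanded
  have hF0 : fderiv ℝ (cmpF B 0) (t, x) et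
      = (cmpF u 0 (t,x) * fderiv ℝ (cmpF B 1) (t,x) (ee 1) + cmpF B 1 (t,x) * fderiv ℝ (cmpF u 0) (t,x) (ee 1)
          - (cmpF u 1 (t,x) * fderiv ℝ (cmpF B 0) (t,x) (ee 1) + cmpF B 0 (t,x) * fderiv ℝ (cmpF u 1) (t,x) (ee 1)))
        - (cmpF u 2 (t,x) * fderiv ℝ (cmpF B 0) (t,x) (ee 2) + cmpF B 0 (t,x) * fderiv ℝ (cmpF u 2) (t,x) (ee 2)
          - (cmpF u 0 (t,x) * fderiv ℝ (cmpF B 2) (t,x) (ee 2) + cmpF B 2 (t,x) * fderiv ℝ (cmpF u 0) (t,x) (ee 2))) := by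
    rw [← hdtB 0, hFar' 0]
    show pd (fun y => cross3 (u t y) (B t y) 2) 1 x
        - pd (fun y => cross3 (u t y) (B t y) 1) 2 x = _
    rw [show (fun y => cross3 (u t y) (B t y) 2)
        = fun y => cmpF u 0 (t,y) * cmpF B 1 (t,y) - cmpF u 1 (t,y) * cmpF B 0 (t,y) from rfl,
      show (fun y => cross3 (u t y) (B t y) 1)
        = fun y => cmpF u 2 (t,y) * cmpF B 0 (t,y) - cmpF u 0 (t,y) * cmpF B 2 (t,y) from rfl,
      pd_mulsub (cmpF u 0) (cmpF B 1) (cmpF u 1) (cmpF B 0) (hUj 0) (hBj 1) (hUj 1) (hBj 0) t x 1,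
      pd_mulsub (cmpF u 2) (cmpF B 0) (cmpF u 0) (cmpF B 2) (hUj 2) (hBj 0) (hUj 0) (hBj 2) t x 2]
  have hF1 : fderiv ℝ (cmpF B 1) (t, x) et
      = (cmpF u 1 (t,x) * fderiv ℝ (cmpF B 2) (t,x) (ee 2) + cmpF B 2 (t,x) * fderiv ℝ (cmpF u 1) (t,x) (ee 2)
          - (cmpF u 2 (t,x) * fderiv ℝ (cmpF B 1) (t,x) (ee 2) + cmpF B 1 (t,x) * fderiv ℝ (cmpF u 2) (t,x) (ee 2)))
        - (cmpF u 0 (t,x) * fderiv ℝ (cmpF B 1) (t,x) (ee 0) + cmpF B 1 (t,x) * fderiv ℝ (cmpF u 0) (t,x) (ee 0)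
          - (cmpF u 1 (t,x) * fderiv ℝ (cmpF B 0) (t,x) (ee 0) + cmpF B 0 (t,x) * fderiv ℝ (cmpF u 1) (t,x) (ee 0))) := by
    rw [← hdtB 1, hFar' 1]
    show pd (fun y => cross3 (u t y) (B t y) 0) 2 x
        - pd (fun y => cross3 (u t y) (B t y) 2) 0 x = _
    rw [show (fun y => cross3 (u t y) (B t y) 0)
        = fun y => cmpF u 1 (t,y) * cmpF B 2 (t,y) - cmpF u 2 (t,y) * cmpF B 1 (t,y) from rfl,
      show (fun y => cross3 (u t y) (B t y) 2)
        = fun y => cmpF u 0 (t,y) * cmpF B 1 (t,y) - cmpF u 1 (t,y) * cmpF B 0 (t,y) from rfl,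
      pd_mulsub (cmpF u 1) (cmpF B 2) (cmpF u 2) (cmpF B 1) (hUj 1) (hBj 2) (hUj 2) (hBj 1) t x 2,
      pd_mulsub (cmpF u 0) (cmpF B 1) (cmpF u 1) (cmpF B 0) (hUj 0) (hBj 1) (hUj 1) (hBj 0) t x 0]
  have hF2 : fderiv ℝ (cmpF B 2) (t, x) et
      = (cmpF u 2 (t,x) * fderiv ℝ (cmpF B 0) (t,x) (ee 0) + cmpF B 0 (t,x) * fderiv ℝ (cmpF u 2) (t,x) (ee 0)
          - (cmpF u 0 (t,x) * fderiv ℝ (cmpF B 2) (t,x) (ee 0) + cmpF B 2 (t,x) * fderiv ℝ (cmpF u 0) (t,x) (ee 0)))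
        - (cmpF u 1 (t,x) * fderiv ℝ (cmpF B 2) (t,x) (ee 1) + cmpF B 2 (t,x) * fderiv ℝ (cmpF u 1) (t,x) (ee 1)
          - (cmpF u 2 (t,x) * fderiv ℝ (cmpF B 1) (t,x) (ee 1) + cmpF B 1 (t,x) * fderiv ℝ (cmpF u 2) (t,x) (ee 1))) := by
    rw [← hdtB 2, hFar' 2]
    show pd (fun y => cross3 (u t y) (B t y) 1) 0 x
        - pd (fun y => cross3 (u t y) (B t y) 0) 1 x = _
    rw [show (fun y => cross3 (u t y) (B t y) 1)
        = fun y => cmpF u 2 (t,y) * cmpF B 0 (t,y) - cmpF u 0 (t,y) * cmpF B 2 (t,y) from rfl,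
      show (fun y => cross3 (u t y) (B t y) 0)
        = fun y => cmpF u 1 (t,y) * cmpF B 2 (t,y) - cmpF u 2 (t,y) * cmpF B 1 (t,y) from rfl,
      pd_mulsub (cmpF u 2) (cmpF B 0) (cmpF u 0) (cmpF B 2) (hUj 2) (hBj 0) (hUj 0) (hBj 2) t x 0,
      pd_mulsub (cmpF u 1) (cmpF B 2) (cmpF u 2) (cmpF B 1) (hUj 1) (hBj 2) (hUj 2) (hBj 1) t x 1]
  -- divergence-free B
  have hDB : fderiv ℝ (cmpF B 0) (t,x) (ee 0) + fderiv ℝ (cmpF B 1) (t,x) (ee 1)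
      + fderiv ℝ (cmpF B 2) (t,x) (ee 2) = 0 := by
    have h := hdivB t x
    simp only [div3, Fin.sum_univ_three] at h
    rw [show pd (fun y => B t y 0) 0 x = fderiv ℝ (cmpF B 0) (t,x) (ee 0) from
        pd_eq (cmpF B 0) t x ((hBj 0).differentiable oneok _) 0,
      show pd (fun y => B t y 1) 1 x = fderiv ℝ (cmpF B 1) (t,x) (ee 1) from
        pd_eq (cmpF B 1) t x ((hBj 1).differentiable oneok _) 1,
      show pd (fun y => B t y 2) 2 x = fderiv ℝ (cmpF B 2) (t,x) (ee 2) from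
        pd_eq (cmpF B 2) t x ((hBj 2).differentiable oneok _) 2] at h
    exact h
  -- expansion of the product derivative in the divergence term
  have hmul : ∀ i : Fin 3, fderiv ℝ (fun q =>
        (∑ j : Fin 3, cmpF B j q * fderiv ℝ (Function.uncurry Λ) q (ee j)) * cmpF u i q)
        (t, x) (ee i)
      = (∑ j : Fin 3, cmpF B j (t,x) * fderiv ℝ (Function.uncurry Λ) (t,x) (ee j))
          * fderiv ℝ (cmpF u i) (t,x) (ee i)
        + cmpF u i (t,x) * (∑ j : Fin 3, (fderiv ℝ (cmpF B j) (t,x) (ee i)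
            * fderiv ℝ (Function.uncurry Λ) (t,x) (ee j)
          + cmpF B j (t,x) * fderiv ℝ (fderiv ℝ (Function.uncurry Λ)) (t,x) (ee i) (ee j))) := by
    intro i
    rw [fderiv_mul_apply' (hΦs.differentiable oneok _) ((hUj i).differentiable oneok _) (ee i),
      dPhi (Function.uncurry Λ) (cmpF B) hL hBj (t, x) (ee i)]
  -- symmetry of second derivatives
  have sT : ∀ j : Fin 3, fderiv ℝ (fderiv ℝ (Function.uncurry Λ)) (t,x) et (ee j)
      = fderiv ℝ (fderiv ℝ (Function.uncurry Λ)) (t,x) (ee j) et := fun j => d2_symm hL _ _ _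
  have sS : ∀ i j : Fin 3, fderiv ℝ (fderiv ℝ (Function.uncurry Λ)) (t,x) (ee i) (ee j)
      = fderiv ℝ (fderiv ℝ (Function.uncurry Λ)) (t,x) (ee j) (ee i) := fun i j => d2_symm hL _ _ _
  have H10 := H1 0; have H11 := H1 1; have H12 := H1 2
  simp only [Fin.sum_univ_three] at H10 H11 H12
  have hm0 := hmul 0; have hm1 := hmul 1; have hm2 := hmul 2
  rw [h1, h2, dPhi (Function.uncurry Λ) (cmpF B) hL hBj (t, x) et]
  simp only [Fin.sum_univ_three] at hm0 hm1 hm2 ⊢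
  rw [hm0, hm1, hm2]
  linear_combination
    (fderiv ℝ (Function.uncurry Λ) (t,x) (ee 0)) * hF0
    + (fderiv ℝ (Function.uncurry Λ) (t,x) (ee 1)) * hF1
    + (fderiv ℝ (Function.uncurry Λ) (t,x) (ee 2)) * hF2
    + cmpF B 0 (t,x) * sT 0 + cmpF B 1 (t,x) * sT 1 + cmpF B 2 (t,x) * sT 2
    + cmpF B 0 (t,x) * H10 + cmpF B 1 (t,x) * H11 + cmpF B 2 (t,x) * H12
    + (cmpF u 0 (t,x) * cmpF B 1 (t,x) - cmpF u 1 (t,x) * cmpF B 0 (t,x)) * sS 0 1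
    + (cmpF u 0 (t,x) * cmpF B 2 (t,x) - cmpF u 2 (t,x) * cmpF B 0 (t,x)) * sS 0 2
    + (cmpF u 1 (t,x) * cmpF B 2 (t,x) - cmpF u 2 (t,x) * cmpF B 1 (t,x)) * sS 1 2
    + (cmpF u 0 (t,x) * fderiv ℝ (Function.uncurry Λ) (t,x) (ee 0)
       + cmpF u 1 (t,x) * fderiv ℝ (Function.uncurry Λ) (t,x) (ee 1)
       + cmpF u 2 (t,x) * fderiv ℝ (Function.uncurry Λ) (t,x) (ee 2)) * hDB

end
end

section
/- Let B, u be smooth time-dependent vector fields on ℝ³ with ∇·B = 0 and ∂B/∂t − ∇×(u×B) = 0, and let φ be a smooth scalar field. Then ∂(B·∇φ)/∂t + ∇·[(B·∇φ)u − B (∂φ/∂t + u·∇φ)] = 0. -/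
open scoped BigOperators
open MeasureTheory

noncomputable section

namespace FPC

section General
variable {E : Type*} [NormedAddCommGroup E] [NormedSpace ℝ E]

/-- Directional derivative operator. -/
def P (U : E → ℝ) (v : E) : E → ℝ := fun p => fderiv ℝ U p v

lemma dAt {f : E → ℝ} (hf : ContDiff ℝ (⊤ : ℕ∞) f) (q : E) :
    DifferentiableAt ℝ f q := (hf.differentiable (by simp)).differentiableAt

lemma P_smooth {U : E → ℝ} (hU : ContDiff ℝ (⊤ : ℕ∞) U) (v : E) :
    ContDiff ℝ (⊤ : ℕ∞) (P U v) := by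
  have h1 : ContDiff ℝ (⊤ : ℕ∞) (fderiv ℝ U) :=
    hU.fderiv_right (m := (⊤ : ℕ∞)) (by simp)
  exact (ContinuousLinearMap.apply ℝ ℝ v).contDiff.comp h1

lemma P_symm {U : E → ℝ} (hU : ContDiff ℝ (⊤ : ℕ∞) U) (v w : E) (q : E) :
    P (P U v) w q = P (P U w) v q := by
  have hdf : ContDiff ℝ (⊤ : ℕ∞) (fderiv ℝ U) :=
    hU.fderiv_right (m := (⊤ : ℕ∞)) (by simp)
  have hdfq : DifferentiableAt ℝ (fderiv ℝ U) q :=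
    (hdf.differentiable (by simp)).differentiableAt
  set f'' := fderiv ℝ (fderiv ℝ U) q with hf''
  have key : ∀ a b : E, P (P U a) b q = f'' b a := by
    intro a b
    have h1 : HasFDerivAt (P U a)
        ((ContinuousLinearMap.apply ℝ ℝ a).comp f'') q :=
      (ContinuousLinearMap.apply ℝ ℝ a).hasFDerivAt.comp q hdfq.hasFDerivAt
    simp [P, h1.fderiv]
  have hsym : f'' v w = f'' w v := by
    apply second_derivative_symmetric (f := U) (f' := fderiv ℝ U)
      (fun y => ((hU.differentiable (by simp)) y).hasFDerivAt) hdfq.hasFDerivAt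
  rw [key v w, key w v, hsym]

lemma P_mul {q : E} {f g : E → ℝ} (hf : DifferentiableAt ℝ f q)
    (hg : DifferentiableAt ℝ g q) (v : E) :
    P (fun p => f p * g p) v q = P f v q * g q + f q * P g v q := by
  simp only [P]
  rw [fderiv_fun_mul hf hg]
  simp only [ContinuousLinearMap.add_apply, ContinuousLinearMap.smul_apply, smul_eq_mul]
  ring

lemma P_sum {q : E} {ι : Type*} {s : Finset ι} {f : ι → E → ℝ}
    (hf : ∀ i ∈ s, DifferentiableAt ℝ (f i) q) (v : E) :
    P (fun p => ∑ i ∈ s, f i p) v q = ∑ i ∈ s, P (f i) v q := by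
  simp only [P]
  rw [fderiv_fun_sum hf]
  simp

lemma P_sub {q : E} {f g : E → ℝ} (hf : DifferentiableAt ℝ f q)
    (hg : DifferentiableAt ℝ g q) (v : E) :
    P (fun p => f p - g p) v q = P f v q - P g v q := by
  simp only [P]
  rw [fderiv_fun_sub hf hg]
  simp

lemma P_add {q : E} {f g : E → ℝ} (hf : DifferentiableAt ℝ f q)
    (hg : DifferentiableAt ℝ g q) (v : E) :
    P (fun p => f p + g p) v q = P f v q + P g v q := by
  simp only [P]
  rw [fderiv_fun_add hf hg]
  simp

end General

/-- Space direction vectors in `ℝ × V3`. -/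
def vS (i : Fin 3) : ℝ × V3 := ((0 : ℝ), Pi.single i 1)

/-- Time direction vector in `ℝ × V3`. -/
def vT : ℝ × V3 := ((1 : ℝ), (0 : V3))

lemma slice_space {U : ℝ × V3 → ℝ} {t : ℝ} {x : V3}
    (hU : DifferentiableAt ℝ U (t, x)) (v : V3) :
    fderiv ℝ (fun y : V3 => U (t, y)) x v = fderiv ℝ U (t, x) ((0 : ℝ), v) := by
  have h := hU.hasFDerivAt.comp x (hasFDerivAt_prodMk_right (𝕜 := ℝ) t x)
  have h2 : fderiv ℝ (fun y : V3 => U (t, y)) x =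
      (fderiv ℝ U (t, x)).comp (ContinuousLinearMap.inr ℝ ℝ V3) := h.fderiv
  rw [h2]
  simp

lemma slice_time {U : ℝ × V3 → ℝ} {t : ℝ} {x : V3}
    (hU : DifferentiableAt ℝ U (t, x)) :
    deriv (fun s : ℝ => U (s, x)) t = fderiv ℝ U (t, x) ((1 : ℝ), (0 : V3)) := by
  have hin : HasDerivAt (fun s : ℝ => (s, x)) ((1 : ℝ), (0 : V3)) t :=
    (hasDerivAt_id t).prodMk (hasDerivAt_const t x)
  exact (hU.hasFDerivAt.comp_hasDerivAt t hin).deriv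

/-- Components of the uncurried vector field. -/
def UCi (F : ℝ → V3 → V3) (i : Fin 3) : ℝ × V3 → ℝ := fun p => F p.1 p.2 i

lemma UCi_smooth {F : ℝ → V3 → V3} (hF : ContDiff ℝ (⊤ : ℕ∞) (Function.uncurry F))
    (i : Fin 3) : ContDiff ℝ (⊤ : ℕ∞) (UCi F i) := contDiff_pi.1 hF i

lemma pd_curried {f : ℝ → V3 → ℝ} (hf : ContDiff ℝ (⊤ : ℕ∞) (Function.uncurry f))
    (s : ℝ) (y : V3) (i : Fin 3) :
    pd (f s) i y = P (Function.uncurry f) (vS i) (s, y) :=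
  slice_space (dAt hf (s, y)) _

lemma dt_curried {f : ℝ → V3 → ℝ} (hf : ContDiff ℝ (⊤ : ℕ∞) (Function.uncurry f))
    (s : ℝ) (y : V3) :
    dtS f s y = P (Function.uncurry f) vT (s, y) :=
  slice_time (dAt hf (s, y))

lemma pdV_curried {F : ℝ → V3 → V3} (hF : ContDiff ℝ (⊤ : ℕ∞) (Function.uncurry F))
    (s : ℝ) (y : V3) (i j : Fin 3) :
    pd (fun y' => F s y' i) j y = P (UCi F i) (vS j) (s, y) :=
  slice_space (dAt (UCi_smooth hF i) (s, y)) _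

lemma dtV_curried {F : ℝ → V3 → V3} (hF : ContDiff ℝ (⊤ : ℕ∞) (Function.uncurry F))
    (s : ℝ) (y : V3) (i : Fin 3) :
    deriv (fun s' => F s' y i) s = P (UCi F i) vT (s, y) :=
  slice_time (dAt (UCi_smooth hF i) (s, y))

/-- Uncurried version of `B·∇φ` (or `u·∇φ`). -/
def Wf (F : ℝ → V3 → V3) (f : ℝ → V3 → ℝ) : ℝ × V3 → ℝ :=
  fun p => ∑ i, UCi F i p * P (Function.uncurry f) (vS i) p

/-- Uncurried version of the flux components. -/
def Gf (Bv uv : ℝ → V3 → V3) (f : ℝ → V3 → ℝ) (j : Fin 3) : ℝ × V3 → ℝ :=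
  fun p => Wf Bv f p * UCi uv j p
    - (P (Function.uncurry f) vT p + Wf uv f p) * UCi Bv j p

lemma Wf_smooth {F : ℝ → V3 → V3} {f : ℝ → V3 → ℝ}
    (hF : ContDiff ℝ (⊤ : ℕ∞) (Function.uncurry F))
    (hf : ContDiff ℝ (⊤ : ℕ∞) (Function.uncurry f)) :
    ContDiff ℝ (⊤ : ℕ∞) (Wf F f) :=
  ContDiff.sum fun i _ => (UCi_smooth hF i).mul (P_smooth hf (vS i))

lemma Gf_smooth {Bv uv : ℝ → V3 → V3} {f : ℝ → V3 → ℝ}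
    (hB : ContDiff ℝ (⊤ : ℕ∞) (Function.uncurry Bv))
    (hu : ContDiff ℝ (⊤ : ℕ∞) (Function.uncurry uv))
    (hf : ContDiff ℝ (⊤ : ℕ∞) (Function.uncurry f)) (j : Fin 3) :
    ContDiff ℝ (⊤ : ℕ∞) (Gf Bv uv f j) :=
  ((Wf_smooth hB hf).mul (UCi_smooth hu j)).sub
    (((P_smooth hf vT).add (Wf_smooth hu hf)).mul (UCi_smooth hB j))

lemma P_Wf {F : ℝ → V3 → V3} {f : ℝ → V3 → ℝ}
    (hF : ContDiff ℝ (⊤ : ℕ∞) (Function.uncurry F))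
    (hf : ContDiff ℝ (⊤ : ℕ∞) (Function.uncurry f)) (v : ℝ × V3) (q : ℝ × V3) :
    P (Wf F f) v q = ∑ i, (P (UCi F i) v q * P (Function.uncurry f) (vS i) q
      + UCi F i q * P (P (Function.uncurry f) (vS i)) v q) := by
  have h : Wf F f = fun p => ∑ i, UCi F i p * P (Function.uncurry f) (vS i) p := rfl
  rw [h, P_sum (fun i _ => dAt ((UCi_smooth hF i).mul (P_smooth hf (vS i))) q) v]
  exact Finset.sum_congr rfl fun i _ =>
    P_mul (dAt (UCi_smooth hF i) q) (dAt (P_smooth hf (vS i)) q) v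

lemma P_Gf {Bv uv : ℝ → V3 → V3} {f : ℝ → V3 → ℝ}
    (hB : ContDiff ℝ (⊤ : ℕ∞) (Function.uncurry Bv))
    (hu : ContDiff ℝ (⊤ : ℕ∞) (Function.uncurry uv))
    (hf : ContDiff ℝ (⊤ : ℕ∞) (Function.uncurry f)) (j : Fin 3) (v q : ℝ × V3) :
    P (Gf Bv uv f j) v q
      = (P (Wf Bv f) v q * UCi uv j q + Wf Bv f q * P (UCi uv j) v q)
        - ((P (P (Function.uncurry f) vT) v q + P (Wf uv f) v q) * UCi Bv j q
            + (P (Function.uncurry f) vT q + Wf uv f q) * P (UCi Bv j) v q) := by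
  have h : Gf Bv uv f j = fun p => Wf Bv f p * UCi uv j p
      - (P (Function.uncurry f) vT p + Wf uv f p) * UCi Bv j p := rfl
  rw [h, P_sub (((Wf_smooth hB hf).mul (UCi_smooth hu j)).differentiable (by simp)
        |>.differentiableAt)
      ((((P_smooth hf vT).add (Wf_smooth hu hf)).mul (UCi_smooth hB j)).differentiable
        (by simp) |>.differentiableAt),
    P_mul (dAt (Wf_smooth hB hf) q) (dAt (UCi_smooth hu j) q),
    P_mul (dAt ((P_smooth hf vT).add (Wf_smooth hu hf)) q) (dAt (UCi_smooth hB j) q),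
    P_add (dAt (P_smooth hf vT) q) (dAt (Wf_smooth hu hf) q)]

/-- Expansion of `pd` of a difference of products (curl components). -/
lemma P_cross {F G : ℝ → V3 → V3}
    (hF : ContDiff ℝ (⊤ : ℕ∞) (Function.uncurry F))
    (hG : ContDiff ℝ (⊤ : ℕ∞) (Function.uncurry G))
    (a b c d : Fin 3) (j : Fin 3) (t : ℝ) (x : V3) :
    pd (fun y => F t y a * G t y b - F t y c * G t y d) j x
      = (P (UCi F a) (vS j) (t, x) * UCi G b (t, x)
          + UCi F a (t, x) * P (UCi G b) (vS j) (t, x))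
        - (P (UCi F c) (vS j) (t, x) * UCi G d (t, x)
          + UCi F c (t, x) * P (UCi G d) (vS j) (t, x)) := by
  have h1 : pd (fun y => F t y a * G t y b - F t y c * G t y d) j x
      = P (fun p => UCi F a p * UCi G b p - UCi F c p * UCi G d p) (vS j) (t, x) :=
    slice_space (dAt (((UCi_smooth hF a).mul (UCi_smooth hG b)).sub
      ((UCi_smooth hF c).mul (UCi_smooth hG d))) (t, x)) _
  rw [h1, P_sub (dAt ((UCi_smooth hF a).mul (UCi_smooth hG b)) _)
      (dAt ((UCi_smooth hF c).mul (UCi_smooth hG d)) _),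
    P_mul (dAt (UCi_smooth hF a) _) (dAt (UCi_smooth hG b) _),
    P_mul (dAt (UCi_smooth hF c) _) (dAt (UCi_smooth hG d) _)]

end FPC

open FPC
theorem faraday_potential_conservation_law
    (B u : ℝ → V3 → V3) (φ : ℝ → V3 → ℝ)
    (hB : SmoothTV B) (hu : SmoothTV u) (hφ : SmoothTS φ)
    (hdivB : ∀ t x, div3 (B t) x = 0)
    (hFar : ∀ t x, dtV B t x - curl3 (fun y => cross3 (u t y) (B t y)) x = 0) :
    ∀ t x, dtS (fun s y => dot3 (B s y) (grad3 (φ s) y)) t x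
      + div3 (fun y => dot3 (B t y) (grad3 (φ t) y) • u t y
          - (dtS φ t y + dot3 (u t y) (grad3 (φ t) y)) • B t y) x = 0 := by
  intro t x
  have hB' : ContDiff ℝ (⊤ : ℕ∞) (Function.uncurry B) := hB
  have hu' : ContDiff ℝ (⊤ : ℕ∞) (Function.uncurry u) := hu
  have hφ' : ContDiff ℝ (⊤ : ℕ∞) (Function.uncurry φ) := hφ
  -- the time-derivative term
  have hT1 : dtS (fun s y => dot3 (B s y) (grad3 (φ s) y)) t x = P (Wf B φ) vT (t, x) := by
    have hfun : (fun s => dot3 (B s x) (grad3 (φ s) x)) = fun s => Wf B φ (s, x) := by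
      funext s
      simp only [dot3, grad3, Wf, UCi]
      exact Finset.sum_congr rfl fun i _ => by rw [pd_curried hφ' s x i]
    show deriv (fun s => dot3 (B s x) (grad3 (φ s) x)) t = _
    rw [hfun]
    exact slice_time (dAt (Wf_smooth hB' hφ') (t, x))
  -- the divergence term
  have hT2 : div3 (fun y => dot3 (B t y) (grad3 (φ t) y) • u t y
      - (dtS φ t y + dot3 (u t y) (grad3 (φ t) y)) • B t y) x
      = ∑ j, P (Gf B u φ j) (vS j) (t, x) := by
    refine Finset.sum_congr rfl fun j _ => ?_
    have hfun : (fun y => (dot3 (B t y) (grad3 (φ t) y) • u t y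
        - (dtS φ t y + dot3 (u t y) (grad3 (φ t) y)) • B t y) j)
        = fun y => Gf B u φ j (t, y) := by
      funext y
      simp only [Pi.sub_apply, Pi.smul_apply, smul_eq_mul, Gf, Wf, UCi, dot3, grad3]
      rw [dt_curried hφ' t y]
      congr 1
      · congr 1
        exact Finset.sum_congr rfl fun i _ => by rw [pd_curried hφ' t y i]
      · congr 2
        exact Finset.sum_congr rfl fun i _ => by rw [pd_curried hφ' t y i]
    rw [hfun]
    exact slice_space (dAt (Gf_smooth hB' hu' hφ' j) (t, x)) _
  rw [hT1, hT2]
  -- translate divergence-free hypothesis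
  have hdiv' : P (UCi B 0) (vS 0) (t, x) + P (UCi B 1) (vS 1) (t, x)
      + P (UCi B 2) (vS 2) (t, x) = 0 := by
    have h := hdivB t x
    simp only [div3, Fin.sum_univ_three] at h
    rw [pdV_curried hB' t x 0 0, pdV_curried hB' t x 1 1, pdV_curried hB' t x 2 2] at h
    linarith
  have hdb : P (UCi B 2) (vS 2) (t, x)
      = - P (UCi B 0) (vS 0) (t, x) - P (UCi B 1) (vS 1) (t, x) := by linarith
  -- translate Faraday's law componentwise
  have hFar' : ∀ i, dtV B t x i = curl3 (fun y => cross3 (u t y) (B t y)) x i := by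
    intro i
    have h := congrFun (hFar t x) i
    simp only [Pi.sub_apply, Pi.zero_apply, sub_eq_zero] at h
    exact h
  have hcross : ∀ y : V3, cross3 (u t y) (B t y)
      = ![u t y 1 * B t y 2 - u t y 2 * B t y 1,
          u t y 2 * B t y 0 - u t y 0 * B t y 2,
          u t y 0 * B t y 1 - u t y 1 * B t y 0] := fun y => rfl
  have hF0 : P (UCi B 0) vT (t, x)
      = ((P (UCi u 0) (vS 1) (t, x) * UCi B 1 (t, x)
          + UCi u 0 (t, x) * P (UCi B 1) (vS 1) (t, x))
        - (P (UCi u 1) (vS 1) (t, x) * UCi B 0 (t, x)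
          + UCi u 1 (t, x) * P (UCi B 0) (vS 1) (t, x)))
      - ((P (UCi u 2) (vS 2) (t, x) * UCi B 0 (t, x)
          + UCi u 2 (t, x) * P (UCi B 0) (vS 2) (t, x))
        - (P (UCi u 0) (vS 2) (t, x) * UCi B 2 (t, x)
          + UCi u 0 (t, x) * P (UCi B 2) (vS 2) (t, x))) := by
    have h := hFar' 0
    rw [show dtV B t x 0 = deriv (fun s => B s x 0) t from rfl,
      dtV_curried hB' t x 0] at h
    simp only [curl3, hcross] at h
    rw [h]
    simp only [Matrix.cons_val_zero, Matrix.cons_val_one, Matrix.head_cons,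
      Matrix.cons_val_two, Matrix.tail_cons]
    rw [show (fun y => u t y 0 * B t y 1 - u t y 1 * B t y 0)
        = (fun y => u t y 0 * B t y 1 - u t y 1 * B t y 0) from rfl,
      P_cross hu' hB' 0 1 1 0 1 t x, P_cross hu' hB' 2 0 0 2 2 t x]
  have hF1 : P (UCi B 1) vT (t, x)
      = ((P (UCi u 1) (vS 2) (t, x) * UCi B 2 (t, x)
          + UCi u 1 (t, x) * P (UCi B 2) (vS 2) (t, x))
        - (P (UCi u 2) (vS 2) (t, x) * UCi B 1 (t, x)
          + UCi u 2 (t, x) * P (UCi B 1) (vS 2) (t, x)))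
      - ((P (UCi u 0) (vS 0) (t, x) * UCi B 1 (t, x)
          + UCi u 0 (t, x) * P (UCi B 1) (vS 0) (t, x))
        - (P (UCi u 1) (vS 0) (t, x) * UCi B 0 (t, x)
          + UCi u 1 (t, x) * P (UCi B 0) (vS 0) (t, x))) := by
    have h := hFar' 1
    rw [show dtV B t x 1 = deriv (fun s => B s x 1) t from rfl,
      dtV_curried hB' t x 1] at h
    simp only [curl3, hcross] at h
    rw [h]
    simp only [Matrix.cons_val_zero, Matrix.cons_val_one, Matrix.head_cons,
      Matrix.cons_val_two, Matrix.tail_cons]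
    rw [P_cross hu' hB' 1 2 2 1 2 t x, P_cross hu' hB' 0 1 1 0 0 t x]
  have hF2 : P (UCi B 2) vT (t, x)
      = ((P (UCi u 2) (vS 0) (t, x) * UCi B 0 (t, x)
          + UCi u 2 (t, x) * P (UCi B 0) (vS 0) (t, x))
        - (P (UCi u 0) (vS 0) (t, x) * UCi B 2 (t, x)
          + UCi u 0 (t, x) * P (UCi B 2) (vS 0) (t, x)))
      - ((P (UCi u 1) (vS 1) (t, x) * UCi B 2 (t, x)
          + UCi u 1 (t, x) * P (UCi B 2) (vS 1) (t, x))
        - (P (UCi u 2) (vS 1) (t, x) * UCi B 1 (t, x)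
          + UCi u 2 (t, x) * P (UCi B 1) (vS 1) (t, x))) := by
    have h := hFar' 2
    rw [show dtV B t x 2 = deriv (fun s => B s x 2) t from rfl,
      dtV_curried hB' t x 2] at h
    simp only [curl3, hcross] at h
    rw [h]
    simp only [Matrix.cons_val_zero, Matrix.cons_val_one, Matrix.head_cons,
      Matrix.cons_val_two, Matrix.tail_cons]
    rw [P_cross hu' hB' 2 0 0 2 0 t x, P_cross hu' hB' 1 2 2 1 1 t x]
  -- symmetry of second derivatives
  have hst : ∀ i : Fin 3, P (P (Function.uncurry φ) (vS i)) vT (t, x)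
      = P (P (Function.uncurry φ) vT) (vS i) (t, x) := fun i => P_symm hφ' _ _ _
  have hs10 : P (P (Function.uncurry φ) (vS 1)) (vS 0) (t, x)
      = P (P (Function.uncurry φ) (vS 0)) (vS 1) (t, x) := P_symm hφ' _ _ _
  have hs20 : P (P (Function.uncurry φ) (vS 2)) (vS 0) (t, x)
      = P (P (Function.uncurry φ) (vS 0)) (vS 2) (t, x) := P_symm hφ' _ _ _
  have hs21 : P (P (Function.uncurry φ) (vS 2)) (vS 1) (t, x)
      = P (P (Function.uncurry φ) (vS 1)) (vS 2) (t, x) := P_symm hφ' _ _ _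
  -- expand everything
  have hval : ∀ (F : ℝ → V3 → V3) (i : Fin 3), UCi F i (t, x) = F t x i := fun _ _ => rfl
  simp only [hval] at hF0 hF1 hF2
  simp only [P_Gf hB' hu' hφ', P_Wf hB' hφ', P_Wf hu' hφ', Wf, Fin.sum_univ_three, hval]
  rw [hF0, hF1, hF2, hst 0, hst 1, hst 2, hs10, hs20, hs21, hdb]
  ring
end
end

section
/- Let ρ > 0, S, r, T be smooth fields and u, B smooth vector fields on ℝ³ × ℝ satisfying: the continuity equation ∂ρ/∂t + ∇·(ρu) = 0, entropy advection ∂S/∂t + u·∇S = 0, dr/dt := ∂r/∂t + u·∇r = −T, ∇·B = 0, Faraday's law ∂B/∂t = ∇×(u×B), and the momentum equation ∂u/∂t − u×(∇×u) + ∇(h + Φ + ½|u|²) − T∇S − ((∇×B)×B)/(μ₀ρ) = 0 with smooth h, Φ. Then the generalized cross-helicity density h_c = B·(u + r∇S) satisfies ∂h_c/∂t + ∇·[h_c u + B(h + Φ − ½|u|²)] = 0. -/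
open scoped BigOperators
open MeasureTheory

noncomputable section

namespace CHAux

lemma diff_of_smooth {E F : Type*} [NormedAddCommGroup E] [NormedSpace ℝ E]
    [NormedAddCommGroup F] [NormedSpace ℝ F] {g : E → F}
    (hg : ContDiff ℝ (⊤:ℕ∞) g) : Differentiable ℝ g :=
  hg.differentiable (by simp)

lemma smooth_slice_t {F : Type*} [NormedAddCommGroup F] [NormedSpace ℝ F]
    (g : ℝ × V3 → F) (hg : ContDiff ℝ (⊤:ℕ∞) g) (x : V3) :
    ContDiff ℝ (⊤:ℕ∞) (fun s : ℝ => g (s, x)) :=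
  hg.comp (contDiff_id.prodMk contDiff_const)

lemma smooth_slice_x {F : Type*} [NormedAddCommGroup F] [NormedSpace ℝ F]
    (g : ℝ × V3 → F) (hg : ContDiff ℝ (⊤:ℕ∞) g) (t : ℝ) :
    ContDiff ℝ (⊤:ℕ∞) (fun y : V3 => g (t, y)) :=
  hg.comp (contDiff_const.prodMk contDiff_id)

lemma hasDerivAt_slice (g : ℝ × V3 → ℝ) (hg : ContDiff ℝ (⊤:ℕ∞) g) (t : ℝ) (x : V3) :
    HasDerivAt (fun s => g (s, x)) (fderiv ℝ g (t, x) (1, 0)) t := by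
  have h1 : HasDerivAt (fun s : ℝ => (s, x)) ((1:ℝ), (0:V3)) t :=
    (hasDerivAt_id t).prodMk (hasDerivAt_const t x)
  exact ((diff_of_smooth hg (t, x)).hasFDerivAt).comp_hasDerivAt t h1

lemma pd_slice (g : ℝ × V3 → ℝ) (hg : ContDiff ℝ (⊤:ℕ∞) g) (t : ℝ) (x : V3) (i : Fin 3) :
    pd (fun y => g (t, y)) i x = fderiv ℝ g (t, x) ((0:ℝ), Pi.single i 1) := by
  have h1 : HasFDerivAt (fun y : V3 => (t, y))
      (((0 : V3 →L[ℝ] ℝ)).prod (ContinuousLinearMap.id ℝ V3)) x :=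
    (hasFDerivAt_const t x).prodMk (hasFDerivAt_id x)
  have h2 := ((diff_of_smooth hg (t, x)).hasFDerivAt).comp x h1
  have h3 : fderiv ℝ (fun y => g (t, y)) x
      = (fderiv ℝ g (t, x)).comp (((0 : V3 →L[ℝ] ℝ)).prod (ContinuousLinearMap.id ℝ V3)) :=
    h2.fderiv
  unfold pd
  rw [h3]
  simp

lemma smooth_fdir (g : ℝ × V3 → ℝ) (hg : ContDiff ℝ (⊤:ℕ∞) g) (v : ℝ × V3) :
    ContDiff ℝ (⊤:ℕ∞) (fun p => fderiv ℝ g p v) := by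
  have h := hg.fderiv_right (m := (⊤:ℕ∞)) (by exact_mod_cast le_top)
  exact h.clm_apply contDiff_const

lemma clairaut (g : ℝ × V3 → ℝ) (hg : ContDiff ℝ (⊤:ℕ∞) g) (q v w : ℝ × V3) :
    fderiv ℝ (fun p => fderiv ℝ g p v) q w = fderiv ℝ (fun p => fderiv ℝ g p w) q v := by
  have hd : ∀ p, HasFDerivAt g (fderiv ℝ g p) p := fun p => (diff_of_smooth hg p).hasFDerivAt
  have hdiff : Differentiable ℝ (fderiv ℝ g) :=
    diff_of_smooth (hg.fderiv_right (m := (⊤:ℕ∞)) (by exact_mod_cast le_top))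
  have hdd : HasFDerivAt (fderiv ℝ g) (fderiv ℝ (fderiv ℝ g) q) q := (hdiff q).hasFDerivAt
  have hsym := second_derivative_symmetric hd hdd v w
  have h1 : ∀ v' : ℝ × V3, fderiv ℝ (fun p => fderiv ℝ g p v') q
      = (fderiv ℝ (fderiv ℝ g) q).flip v' := by
    intro v'
    rw [fderiv_clm_apply (hdiff q) (differentiableAt_const v')]
    simp
  rw [h1 v, h1 w]
  simp only [ContinuousLinearMap.flip_apply]
  exact hsym.symm

section fdir
variable {E : Type*} [NormedAddCommGroup E] [NormedSpace ℝ E]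

lemma fdir_add {f g : E → ℝ} {q : E} (v : E) (hf : DifferentiableAt ℝ f q)
    (hg : DifferentiableAt ℝ g q) :
    fderiv ℝ (fun y => f y + g y) q v = fderiv ℝ f q v + fderiv ℝ g q v := by
  rw [fderiv_fun_add hf hg]; simp

lemma fdir_sub {f g : E → ℝ} {q : E} (v : E) (hf : DifferentiableAt ℝ f q)
    (hg : DifferentiableAt ℝ g q) :
    fderiv ℝ (fun y => f y - g y) q v = fderiv ℝ f q v - fderiv ℝ g q v := by
  rw [fderiv_fun_sub hf hg]; simp

lemma fdir_mul {f g : E → ℝ} {q : E} (v : E) (hf : DifferentiableAt ℝ f q)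
    (hg : DifferentiableAt ℝ g q) :
    fderiv ℝ (fun y => f y * g y) q v = fderiv ℝ f q v * g q + f q * fderiv ℝ g q v := by
  rw [fderiv_fun_mul hf hg]; simp; ring

lemma fdir_neg {f : E → ℝ} {q : E} (v : E) :
    fderiv ℝ (fun y => -f y) q v = -fderiv ℝ f q v := by
  rw [fderiv_fun_neg]; simp

lemma fdir_const {q : E} (c : ℝ) (v : E) : fderiv ℝ (fun _ : E => c) q v = 0 := by
  rw [fderiv_fun_const]; simp

end fdir

end CHAux


set_option maxHeartbeats 4000000 in
theorem generalized_cross_helicity_conservation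
    (ρ S r T h : ℝ → V3 → ℝ) (Φ : V3 → ℝ) (u B : ℝ → V3 → V3) (μ₀ : ℝ)
    (hρ : SmoothTS ρ) (hS : SmoothTS S) (hr : SmoothTS r) (hT : SmoothTS T)
    (hh : SmoothTS h) (hΦ : SmoothS Φ) (hu : SmoothTV u) (hB : SmoothTV B)
    (hμ₀ : 0 < μ₀) (hρpos : ∀ t x, 0 < ρ t x)
    (hcont : ∀ t x, dtS ρ t x + div3 (fun y => ρ t y • u t y) x = 0)
    (hent : ∀ t x, dtS S t x + dot3 (u t x) (grad3 (S t) x) = 0)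
    (hreq : ∀ t x, dtS r t x + dot3 (u t x) (grad3 (r t) x) = - T t x)
    (hdivB : ∀ t x, div3 (B t) x = 0)
    (hFar : ∀ t x, dtV B t x = curl3 (fun y => cross3 (u t y) (B t y)) x)
    (hmom : ∀ t x, dtV u t x - cross3 (u t x) (curl3 (u t) x)
        + grad3 (fun y => h t y + Φ y + (1/2) * dot3 (u t y) (u t y)) x
        - T t x • grad3 (S t) x
        - (μ₀ * ρ t x)⁻¹ • cross3 (curl3 (B t) x) (B t x) = 0) :
    ∀ t x, dtS (fun s y => dot3 (B s y) (u s y + r s y • grad3 (S s) y)) t x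
      + div3 (fun y => dot3 (B t y) (u t y + r t y • grad3 (S t) y) • u t y
          + (h t y + Φ y - (1/2) * dot3 (u t y) (u t y)) • B t y) x = 0 := by
  intro t x
  have hSg : ContDiff ℝ (⊤:ℕ∞) (fun p : ℝ × V3 => S p.1 p.2) := hS
  have hrg : ContDiff ℝ (⊤:ℕ∞) (fun p : ℝ × V3 => r p.1 p.2) := hr
  have hhg : ContDiff ℝ (⊤:ℕ∞) (fun p : ℝ × V3 => h p.1 p.2) := hh
  have hug : ∀ j, ContDiff ℝ (⊤:ℕ∞) (fun p : ℝ × V3 => u p.1 p.2 j) := fun j => contDiff_pi.1 hu j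
  have hBg : ∀ j, ContDiff ℝ (⊤:ℕ∞) (fun p : ℝ × V3 => B p.1 p.2 j) := fun j => contDiff_pi.1 hB j
  -- spatial differentiability atoms
  have Du0 : Differentiable ℝ (fun y => u t y 0) := CHAux.diff_of_smooth (CHAux.smooth_slice_x _ (hug 0) t)
  have Du1 : Differentiable ℝ (fun y => u t y 1) := CHAux.diff_of_smooth (CHAux.smooth_slice_x _ (hug 1) t)
  have Du2 : Differentiable ℝ (fun y => u t y 2) := CHAux.diff_of_smooth (CHAux.smooth_slice_x _ (hug 2) t)
  have DB0 : Differentiable ℝ (fun y => B t y 0) := CHAux.diff_of_smooth (CHAux.smooth_slice_x _ (hBg 0) t)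
  have DB1 : Differentiable ℝ (fun y => B t y 1) := CHAux.diff_of_smooth (CHAux.smooth_slice_x _ (hBg 1) t)
  have DB2 : Differentiable ℝ (fun y => B t y 2) := CHAux.diff_of_smooth (CHAux.smooth_slice_x _ (hBg 2) t)
  have Dr : Differentiable ℝ (fun y => r t y) := CHAux.diff_of_smooth (CHAux.smooth_slice_x _ hrg t)
  have Dh : Differentiable ℝ (fun y => h t y) := CHAux.diff_of_smooth (CHAux.smooth_slice_x _ hhg t)
  have DPhi : Differentiable ℝ Φ := CHAux.diff_of_smooth hΦ
  have DS0 : Differentiable ℝ (fun y => fderiv ℝ (fun p : ℝ × V3 => S p.1 p.2) (t, y) ((0:ℝ), Pi.single 0 1)) :=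
    CHAux.diff_of_smooth (CHAux.smooth_slice_x _ (CHAux.smooth_fdir _ hSg _) t)
  have DS1 : Differentiable ℝ (fun y => fderiv ℝ (fun p : ℝ × V3 => S p.1 p.2) (t, y) ((0:ℝ), Pi.single 1 1)) :=
    CHAux.diff_of_smooth (CHAux.smooth_slice_x _ (CHAux.smooth_fdir _ hSg _) t)
  have DS2 : Differentiable ℝ (fun y => fderiv ℝ (fun p : ℝ × V3 => S p.1 p.2) (t, y) ((0:ℝ), Pi.single 2 1)) :=
    CHAux.diff_of_smooth (CHAux.smooth_slice_x _ (CHAux.smooth_fdir _ hSg _) t)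
  -- time differentiability atoms
  have Dtu0 : Differentiable ℝ (fun s => u s x 0) := CHAux.diff_of_smooth (CHAux.smooth_slice_t _ (hug 0) x)
  have Dtu1 : Differentiable ℝ (fun s => u s x 1) := CHAux.diff_of_smooth (CHAux.smooth_slice_t _ (hug 1) x)
  have Dtu2 : Differentiable ℝ (fun s => u s x 2) := CHAux.diff_of_smooth (CHAux.smooth_slice_t _ (hug 2) x)
  have DtB0 : Differentiable ℝ (fun s => B s x 0) := CHAux.diff_of_smooth (CHAux.smooth_slice_t _ (hBg 0) x)
  have DtB1 : Differentiable ℝ (fun s => B s x 1) := CHAux.diff_of_smooth (CHAux.smooth_slice_t _ (hBg 1) x)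
  have DtB2 : Differentiable ℝ (fun s => B s x 2) := CHAux.diff_of_smooth (CHAux.smooth_slice_t _ (hBg 2) x)
  have Dtr : Differentiable ℝ (fun s => r s x) := CHAux.diff_of_smooth (CHAux.smooth_slice_t _ hrg x)
  have DtS0 : Differentiable ℝ (fun s => fderiv ℝ (fun p : ℝ × V3 => S p.1 p.2) (s, x) ((0:ℝ), Pi.single 0 1)) :=
    CHAux.diff_of_smooth (CHAux.smooth_slice_t _ (CHAux.smooth_fdir _ hSg _) x)
  have DtS1 : Differentiable ℝ (fun s => fderiv ℝ (fun p : ℝ × V3 => S p.1 p.2) (s, x) ((0:ℝ), Pi.single 1 1)) :=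
    CHAux.diff_of_smooth (CHAux.smooth_slice_t _ (CHAux.smooth_fdir _ hSg _) x)
  have DtS2 : Differentiable ℝ (fun s => fderiv ℝ (fun p : ℝ × V3 => S p.1 p.2) (s, x) ((0:ℝ), Pi.single 2 1)) :=
    CHAux.diff_of_smooth (CHAux.smooth_slice_t _ (CHAux.smooth_fdir _ hSg _) x)
  -- product-space differentiability atoms
  have Dpu0 : Differentiable ℝ (fun p : ℝ × V3 => u p.1 p.2 0) := CHAux.diff_of_smooth (hug 0)
  have Dpu1 : Differentiable ℝ (fun p : ℝ × V3 => u p.1 p.2 1) := CHAux.diff_of_smooth (hug 1)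
  have Dpu2 : Differentiable ℝ (fun p : ℝ × V3 => u p.1 p.2 2) := CHAux.diff_of_smooth (hug 2)
  have DpS0 : Differentiable ℝ (fun p : ℝ × V3 => fderiv ℝ (fun q : ℝ × V3 => S q.1 q.2) p ((0:ℝ), Pi.single 0 1)) :=
    CHAux.diff_of_smooth (CHAux.smooth_fdir _ hSg _)
  have DpS1 : Differentiable ℝ (fun p : ℝ × V3 => fderiv ℝ (fun q : ℝ × V3 => S q.1 q.2) p ((0:ℝ), Pi.single 1 1)) :=
    CHAux.diff_of_smooth (CHAux.smooth_fdir _ hSg _)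
  have DpS2 : Differentiable ℝ (fun p : ℝ × V3 => fderiv ℝ (fun q : ℝ × V3 => S q.1 q.2) p ((0:ℝ), Pi.single 2 1)) :=
    CHAux.diff_of_smooth (CHAux.smooth_fdir _ hSg _)
  -- conversion lemmas
  have cS : ∀ (s : ℝ) (y : V3) (i : Fin 3), fderiv ℝ (S s) y (Pi.single i 1)
      = fderiv ℝ (fun p : ℝ × V3 => S p.1 p.2) (s, y) ((0:ℝ), Pi.single i 1) := by
    intro s y i
    have h0 := CHAux.pd_slice (fun p : ℝ × V3 => S p.1 p.2) hSg s y i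
    simpa [pd] using h0
  have cu : ∀ (s : ℝ) (y : V3) (i j : Fin 3),
      fderiv ℝ (fun p : ℝ × V3 => u p.1 p.2 j) (s, y) ((0:ℝ), Pi.single i 1)
      = fderiv ℝ (fun y' => u s y' j) y (Pi.single i 1) := by
    intro s y i j
    have h0 := CHAux.pd_slice (fun p : ℝ × V3 => u p.1 p.2 j) (hug j) s y i
    simp only [pd] at h0
    exact h0.symm
  have cS2 : ∀ (s : ℝ) (y : V3) (i j : Fin 3),
      fderiv ℝ (fun p : ℝ × V3 => fderiv ℝ (fun q : ℝ × V3 => S q.1 q.2) p ((0:ℝ), Pi.single j 1)) (s, y) ((0:ℝ), Pi.single i 1)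
      = fderiv ℝ (fun y' => fderiv ℝ (fun q : ℝ × V3 => S q.1 q.2) (s, y') ((0:ℝ), Pi.single j 1)) y (Pi.single i 1) := by
    intro s y i j
    have h0 := CHAux.pd_slice _ (CHAux.smooth_fdir (fun q : ℝ × V3 => S q.1 q.2) hSg ((0:ℝ), Pi.single j 1)) s y i
    simp only [pd] at h0
    exact h0.symm
  have cdtS : ∀ (s : ℝ) (y : V3), deriv (fun s' => S s' y) s
      = fderiv ℝ (fun p : ℝ × V3 => S p.1 p.2) (s, y) ((1:ℝ), (0:V3)) :=
    fun s y => (CHAux.hasDerivAt_slice _ hSg s y).deriv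
  -- pointwise entropy equation, uncurried form
  have hent' : ∀ p : ℝ × V3,
      fderiv ℝ (fun q : ℝ × V3 => S q.1 q.2) p ((1:ℝ), (0:V3))
      = -(u p.1 p.2 0 * fderiv ℝ (fun q : ℝ × V3 => S q.1 q.2) p ((0:ℝ), Pi.single 0 1)
        + u p.1 p.2 1 * fderiv ℝ (fun q : ℝ × V3 => S q.1 q.2) p ((0:ℝ), Pi.single 1 1)
        + u p.1 p.2 2 * fderiv ℝ (fun q : ℝ × V3 => S q.1 q.2) p ((0:ℝ), Pi.single 2 1)) := by
    intro p
    have h0 := hent p.1 p.2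
    simp only [dtS, dot3, grad3, pd, Fin.sum_univ_three, cdtS, cS] at h0
    linarith [h0]
  have hfe : (fun p : ℝ × V3 => fderiv ℝ (fun q : ℝ × V3 => S q.1 q.2) p ((1:ℝ), (0:V3)))
      = (fun p : ℝ × V3 => -(u p.1 p.2 0 * fderiv ℝ (fun q : ℝ × V3 => S q.1 q.2) p ((0:ℝ), Pi.single 0 1)
        + u p.1 p.2 1 * fderiv ℝ (fun q : ℝ × V3 => S q.1 q.2) p ((0:ℝ), Pi.single 1 1)
        + u p.1 p.2 2 * fderiv ℝ (fun q : ℝ × V3 => S q.1 q.2) p ((0:ℝ), Pi.single 2 1))) :=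
    funext hent'
  -- mixed second derivative relations
  have G0 := (CHAux.hasDerivAt_slice _ (CHAux.smooth_fdir (fun q : ℝ × V3 => S q.1 q.2) hSg ((0:ℝ), Pi.single 0 1)) t x).deriv
  have G1 := (CHAux.hasDerivAt_slice _ (CHAux.smooth_fdir (fun q : ℝ × V3 => S q.1 q.2) hSg ((0:ℝ), Pi.single 1 1)) t x).deriv
  have G2 := (CHAux.hasDerivAt_slice _ (CHAux.smooth_fdir (fun q : ℝ × V3 => S q.1 q.2) hSg ((0:ℝ), Pi.single 2 1)) t x).deriv
  rw [CHAux.clairaut (fun q : ℝ × V3 => S q.1 q.2) hSg (t, x) ((0:ℝ), Pi.single 0 1) ((1:ℝ), (0:V3)), hfe] at G0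
  rw [CHAux.clairaut (fun q : ℝ × V3 => S q.1 q.2) hSg (t, x) ((0:ℝ), Pi.single 1 1) ((1:ℝ), (0:V3)), hfe] at G1
  rw [CHAux.clairaut (fun q : ℝ × V3 => S q.1 q.2) hSg (t, x) ((0:ℝ), Pi.single 2 1) ((1:ℝ), (0:V3)), hfe] at G2
  simp (disch := fun_prop) only [CHAux.fdir_neg, CHAux.fdir_add, CHAux.fdir_mul, cu, cS2] at G0 G1 G2
  -- symmetry of second spatial derivatives of S
  have SY : ∀ i j : Fin 3,
      fderiv ℝ (fun y' => fderiv ℝ (fun q : ℝ × V3 => S q.1 q.2) (t, y') ((0:ℝ), Pi.single j 1)) x (Pi.single i 1)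
      = fderiv ℝ (fun y' => fderiv ℝ (fun q : ℝ × V3 => S q.1 q.2) (t, y') ((0:ℝ), Pi.single i 1)) x (Pi.single j 1) := by
    intro i j
    rw [← cS2 t x i j, ← cS2 t x j i]
    exact CHAux.clairaut (fun q : ℝ × V3 => S q.1 q.2) hSg (t, x) ((0:ℝ), Pi.single j 1) ((0:ℝ), Pi.single i 1)
  -- expand hypotheses
  have F0 := congrFun (hFar t x) 0
  have F1 := congrFun (hFar t x) 1
  have F2 := congrFun (hFar t x) 2
  have M0 := congrFun (hmom t x) 0
  have M1 := congrFun (hmom t x) 1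
  have M2 := congrFun (hmom t x) 2
  have R0 := hreq t x
  have DBe := hdivB t x
  simp only [dtV, dtS, div3, curl3, cross3, dot3, grad3, pd, Fin.sum_univ_three,
    Matrix.cons_val_zero, Matrix.cons_val_one, Matrix.head_cons, Matrix.cons_val_two,
    Matrix.tail_cons, Pi.add_apply, Pi.sub_apply, Pi.smul_apply, Pi.zero_apply,
    smul_eq_mul, cS] at F0 F1 F2 M0 M1 M2 R0 DBe ⊢
  simp (disch := fun_prop) only [deriv_fun_add, deriv_fun_mul, CHAux.fdir_add, CHAux.fdir_sub,
    CHAux.fdir_mul, CHAux.fdir_neg, CHAux.fdir_const] at F0 F1 F2 M0 M1 M2 ⊢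
  have DB' : fderiv ℝ (fun y => B t y 2) x (Pi.single 2 1)
      = -fderiv ℝ (fun y => B t y 0) x (Pi.single 0 1)
        - fderiv ℝ (fun y => B t y 1) x (Pi.single 1 1) := by linarith [DBe]
  rw [F0, F1, F2, G0, G1, G2, DB', SY 1 0, SY 2 0, SY 2 1]
  linear_combination (B t x 0) * M0 + (B t x 1) * M1 + (B t x 2) * M2
    + (B t x 0 * fderiv ℝ (fun p : ℝ × V3 => S p.1 p.2) (t, x) ((0:ℝ), Pi.single 0 1)
      + B t x 1 * fderiv ℝ (fun p : ℝ × V3 => S p.1 p.2) (t, x) ((0:ℝ), Pi.single 1 1)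
      + B t x 2 * fderiv ℝ (fun p : ℝ × V3 => S p.1 p.2) (t, x) ((0:ℝ), Pi.single 2 1)) * R0
end
end
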